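/- (Scalar FPI, closed form for the double root) Let a > 0, g > 0, h = h_M := −(1−a)²/g, so that the quadratic g·x² + (1 − a² − g·h)·x − h = 0 has the double root x_M = x_m with multiplier t̂_{x_M} = 1. Let x_0 > x_M and define x_{k+1} := a²·x_k/(1 + g·x_k) + h. Then each x_k is well-defined and for all k ≥ 0, x_k = x_M + a·(x_0 − x_M)/(g·(x_0 − x_M)·k + a); consequently (x_k) decreases to x_M and lim_{k→∞} |x_{k+1} − x_M|/|x_k − x_M| = 1 (sublinear convergence). -/

import Mathlib

open Filter Topology

/-- Scalar fixed-point iteration, closed form in the double-root case `h = h_M`: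
`x_k = x_M + a (x₀ - x_M)/(g (x₀ - x_M) k + a)`; the iterates decrease to `x_M` and the
convergence is sublinear. -/
theorem scalar_fpi_closed_form_double_root (a g h : ℝ) (ha : 0 < a) (hg : 0 < g)
    (hh : h = -(1 - a) ^ 2 / g)
    (x : ℕ → ℝ) (hrec : ∀ k : ℕ, x (k + 1) = a ^ 2 * x k / (1 + g * x k) + h) :
    let xM : ℝ := -(1 - a ^ 2 - g * h) / (2 * g)
    x 0 > xM →
      (1 - a ^ 2 - g * h) ^ 2 + 4 * g * h = 0 ∧
      a ^ 2 / (1 + g * xM) ^ 2 = 1 ∧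
      (∀ k : ℕ, 0 < 1 + g * x k ∧
        x k = xM + a * (x 0 - xM) / (g * (x 0 - xM) * (k : ℝ) + a)) ∧
      StrictAnti x ∧
      Filter.Tendsto x Filter.atTop (nhds xM) ∧
      Filter.Tendsto (fun k : ℕ => |x (k + 1) - xM| / |x k - xM|) Filter.atTop (nhds 1) := by
  intro xM hx0
  have hg' : g ≠ 0 := hg.ne'
  have ha' : a ≠ 0 := ha.ne'
  have hxM_def : xM = -(1 - a ^ 2 - g * h) / (2 * g) := rfl
  have hxM : xM = (a - 1) / g := by
    rw [hxM_def, hh]; field_simp; ring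
  set d : ℝ := x 0 - xM with hd_def
  have hd : 0 < d := by simp only [hd_def]; linarith
  have hd' : d ≠ 0 := hd.ne'
  have hD : ∀ k : ℕ, 0 < g * d * (k : ℝ) + a := by
    intro k; positivity
  have hD' : ∀ k : ℕ, g * d * (k : ℝ) + a ≠ 0 := fun k => (hD k).ne'
  -- closed form
  have key : ∀ k : ℕ, x k = xM + a * d / (g * d * (k : ℝ) + a) := by
    intro k
    induction k with
    | zero =>
      simp only [Nat.cast_zero, mul_zero, zero_add]
      have : a * d / a = d := by field_simp
      rw [this, hd_def]; ring
    | succ k ih =>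
      have hDk := hD' k
      have hDk1 := hD' (k + 1)
      have hden : 1 + g * x k = a * (g * d * ((k : ℝ) + 1) + a) / (g * d * (k : ℝ) + a) := by
        rw [ih, hxM]
        field_simp
        ring
      have hdenpos : 0 < 1 + g * x k := by
        rw [hden]
        have h1 : (0:ℝ) < g * d * ((k : ℝ) + 1) + a := by positivity
        positivity
      rw [hrec k, ih, hh, hxM]
      have hcast : ((k + 1 : ℕ) : ℝ) = (k : ℝ) + 1 := by push_cast; ring
      rw [hcast]
      have hDk1' : g * d * ((k : ℝ) + 1) + a ≠ 0 := by positivity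
      rw [show (1 : ℝ) + g * ((a - 1) / g + a * d / (g * d * (k : ℝ) + a))
            = a * (g * d * ((k : ℝ) + 1) + a) / (g * d * (k : ℝ) + a) by
        field_simp; ring]
      field_simp
      ring
  have hpos : ∀ k : ℕ, 0 < 1 + g * x k := by
    intro k
    rw [key k, hxM]
    have h1 : (1 : ℝ) + g * ((a - 1) / g + a * d / (g * d * (k : ℝ) + a))
        = a + g * (a * d / (g * d * (k : ℝ) + a)) := by
      field_simp; ring
    rw [h1]
    have := hD k
    positivity
  -- strict antitonicity
  have hanti : StrictAnti x := by
    apply strictAnti_nat_of_succ_lt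
    intro k
    rw [key k, key (k + 1)]
    have hcast : ((k + 1 : ℕ) : ℝ) = (k : ℝ) + 1 := by push_cast; ring
    rw [hcast]
    have hlt : g * d * (k : ℝ) + a < g * d * ((k : ℝ) + 1) + a := by nlinarith
    have had : 0 < a * d := by positivity
    have := div_lt_div_of_pos_left had (hD k) hlt
    linarith
  -- tendsto
  have htop : Tendsto (fun k : ℕ => g * d * (k : ℝ) + a) atTop atTop := by
    apply tendsto_atTop_add_const_right
    exact Tendsto.const_mul_atTop (by positivity) tendsto_natCast_atTop_atTop
  have hlim : Tendsto x atTop (nhds xM) := by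
    have h0 : Tendsto (fun k : ℕ => xM + a * d / (g * d * (k : ℝ) + a)) atTop (nhds (xM + 0)) := by
      exact Tendsto.const_add _ (Tendsto.div_atTop tendsto_const_nhds htop)
    rw [add_zero] at h0
    exact h0.congr (fun k => (key k).symm)
  -- ratio limit
  have hratio : ∀ k : ℕ, |x (k + 1) - xM| / |x k - xM|
      = 1 - g * d / (g * d * ((k : ℝ) + 1) + a) := by
    intro k
    have hcast : ((k + 1 : ℕ) : ℝ) = (k : ℝ) + 1 := by push_cast; ring
    have hDk1 : (0:ℝ) < g * d * ((k : ℝ) + 1) + a := by positivity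
    have e1 : x (k + 1) - xM = a * d / (g * d * ((k : ℝ) + 1) + a) := by
      rw [key (k + 1), hcast]; ring
    have e2 : x k - xM = a * d / (g * d * (k : ℝ) + a) := by
      rw [key k]; ring
    rw [e1, e2, abs_of_pos (by positivity), abs_of_pos (by positivity)]
    field_simp
    ring
  have hrt : Tendsto (fun k : ℕ => |x (k + 1) - xM| / |x k - xM|) atTop (nhds 1) := by
    have h0 : Tendsto (fun k : ℕ => 1 - g * d / (g * d * ((k : ℝ) + 1) + a)) atTop
        (nhds (1 - 0)) := by
      apply Tendsto.const_sub
      apply Tendsto.div_atTop tendsto_const_nhds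
      apply tendsto_atTop_add_const_right
      apply Tendsto.const_mul_atTop (by positivity)
      exact tendsto_atTop_add_const_right _ _ tendsto_natCast_atTop_atTop
    rw [sub_zero] at h0
    exact h0.congr (fun k => (hratio k).symm)
  refine ⟨by rw [hh]; field_simp; ring, ?_, fun k => ⟨hpos k, key k⟩, hanti, hlim, hrt⟩
  have hA : 1 + g * xM = a := by rw [hxM]; field_simp; ring
  rw [hA]
  field_simp
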